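/- Assume n ≥ 2 and every component type I k has at least two elements, and let f : In → O. Then φ_dm is semantically gray-box monitorable in Sys f — that is, every finite U ⊆ graph f has a finite V with U ⊆ V ⊆ graph f such that V permanently satisfies φ_dm in Sys f or V permanently violates φ_dm in Sys f — if and only if f is NOT distributed data-minimal or the input type In is finite. -/

import Mathlib

/-- A set `T` of input/output traces satisfies the distributed-data-minimality
hyperproperty `φ_dm`. -/
def PhiDM {n : ℕ} {I : Fin n → Type*} {O : Type*}
    (T : Set ((∀ k, I k) × O)) : Prop :=
  ∀ i : Fin n, ∀ u ∈ T, ∀ u' ∈ T, u.1 i ≠ u'.1 i →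
    ∃ v ∈ T, ∃ v' ∈ T, v.1 i = u.1 i ∧ v'.1 i = u'.1 i ∧
      (∀ k, k ≠ i → v.1 k = v'.1 k) ∧ v.2 ≠ v'.2

/-- The function `f` is distributed data-minimal (DDM). -/
def DDM {n : ℕ} {I : Fin n → Type*} {O : Type*}
    (f : (∀ k, I k) → O) : Prop :=
  ∀ i : Fin n, ∀ x y : I i, x ≠ y →
    ∃ z : ∀ k, I k, f (Function.update z i x) ≠ f (Function.update z i y)

/-- The graph of `f`: the set of its valid input/output pairs. -/
def graphOf {n : ℕ} {I : Fin n → Type*} {O : Type*}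
    (f : (∀ k, I k) → O) : Set ((∀ k, I k) × O) :=
  {p | p.2 = f p.1}

/-- If `f` is DDM, its graph satisfies `φ_dm`. -/
lemma phiDM_graphOf {n : ℕ} {I : Fin n → Type*} {O : Type*}
    {f : (∀ k, I k) → O} (hf : DDM f) : PhiDM (graphOf f) := by
  intro i u _ u' _ hne
  obtain ⟨z, hz⟩ := hf i (u.1 i) (u'.1 i) hne
  refine ⟨(Function.update z i (u.1 i), f (Function.update z i (u.1 i))), rfl,
    (Function.update z i (u'.1 i), f (Function.update z i (u'.1 i))), rfl, ?_, ?_, ?_, hz⟩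
  · simp
  · simp
  · intro k hk; simp [Function.update_of_ne hk]

theorem ddm_graybox_monitorable_iff_nonminimal_or_finite
    {n : ℕ} {I : Fin n → Type*} {O : Type*}
    (hn : 2 ≤ n) (hI : ∀ k : Fin n, ∃ x y : I k, x ≠ y)
    (f : (∀ k, I k) → O) :
    (∀ U : Set ((∀ k, I k) × O), U.Finite → U ⊆ graphOf f →
      ∃ V : Set ((∀ k, I k) × O), U ⊆ V ∧ V ⊆ graphOf f ∧ V.Finite ∧
        ((∀ B : Set ((∀ k, I k) × O), V ⊆ B → B ⊆ graphOf f → PhiDM B) ∨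
         (∀ B : Set ((∀ k, I k) × O), V ⊆ B → B ⊆ graphOf f → ¬ PhiDM B)))
    ↔ (¬ DDM f ∨ Finite (∀ k, I k)) := by
  constructor
  · intro hmono
    by_contra hcon
    push_neg at hcon
    obtain ⟨hddm', hninf⟩ := hcon
    have hddm : DDM f := hddm'
    have hinf : Infinite (∀ k, I k) := hninf
    -- some coordinate must be infinite
    have hj : ∃ j : Fin n, Infinite (I j) := by
      by_contra hk
      push_neg at hk
      have : ∀ k : Fin n, Finite (I k) := by
        intro k
        have := hk k
        exact this
      haveI := this
      haveI : Finite (∀ k, I k) := Pi.finite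
      exact not_finite_iff_infinite.mpr hninf this
    obtain ⟨j, hIj⟩ := hj
    obtain ⟨V, -, hVg, hVfin, hcase⟩ := hmono ∅ Set.finite_empty (Set.empty_subset _)
    rcases hcase with hsat | hviol
    · -- permanent satisfaction: build a failing superset B
      -- fresh values at coordinate j
      have hSfin : ((fun p : (∀ k, I k) × O => p.1 j) '' V).Finite := hVfin.image _
      have hScinf : ((fun p : (∀ k, I k) × O => p.1 j) '' V)ᶜ.Infinite :=
        hSfin.infinite_compl
      obtain ⟨x, hx, y, hy, hxy⟩ := hScinf.nontrivial
      -- a coordinate i ≠ j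
      haveI : Nontrivial (Fin n) :=
        ⟨⟨⟨0, by omega⟩, ⟨1, by omega⟩, by simp [Fin.ext_iff]⟩⟩
      obtain ⟨i, hij⟩ := exists_ne j
      obtain ⟨x₂, y₂, hxy2⟩ := hI i
      set z : ∀ k, I k := fun k => (hI k).choose with hzdef
      set a : ∀ k, I k := Function.update (Function.update z j x) i x₂ with hadef
      set b : ∀ k, I k := Function.update (Function.update z j y) i y₂ with hbdef
      have haj : a j = x := by
        simp [hadef, Function.update_of_ne (Ne.symm hij)]
      have hbj : b j = y := by
        simp [hbdef, Function.update_of_ne (Ne.symm hij)]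
      have hai : a i = x₂ := by simp [hadef]
      have hbi : b i = y₂ := by simp [hbdef]
      set B : Set ((∀ k, I k) × O) := V ∪ {(a, f a), (b, f b)} with hBdef
      have hBg : B ⊆ graphOf f := by
        intro p hp
        rcases hp with hp | hp
        · exact hVg hp
        · rcases hp with hp | hp <;> (subst hp; rfl)
      have hphi : PhiDM B := hsat B Set.subset_union_left hBg
      have haB : (a, f a) ∈ B := Or.inr (Or.inl rfl)
      have hbB : (b, f b) ∈ B := Or.inr (Or.inr rfl)
      obtain ⟨v, hv, v', hv', h1, h2, h3, h4⟩ :=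
        hphi j (a, f a) haB (b, f b) hbB (by simpa [haj, hbj] using hxy)
      have h1' : v.1 j = x := by simpa [haj] using h1
      have h2' : v'.1 j = y := by simpa [hbj] using h2
      -- identify v and v'
      have hvB : v = (a, f a) := by
        rcases hv with hv | hv
        · exact absurd ⟨v, hv, h1'⟩ hx
        · rcases hv with hv | hv
          · exact hv
          · exfalso; apply hxy.symm; rw [← h1', hv]; exact hbj.symm
      have hv'B : v' = (b, f b) := by
        rcases hv' with hv' | hv'
        · exact absurd ⟨v', hv', h2'⟩ hy
        · rcases hv' with hv' | hv'
          · exfalso; apply hxy; rw [← h2', hv']; exact haj.symm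
          · exact hv'
      have := h3 i hij
      rw [hvB, hv'B] at this
      simp only [hai, hbi] at this
      exact hxy2 this
    · -- permanent violation is impossible since the full graph satisfies φ_dm
      exact hviol (graphOf f) hVg (le_refl _) (phiDM_graphOf hddm)
  · rintro (hndm | hfin) <;> intro U hUfin hUg
    case inl =>
      -- not DDM: permanent violation
      unfold DDM at hndm
      push_neg at hndm
      obtain ⟨i, x, y, hxy, hz⟩ := hndm
      set z₀ : ∀ k, I k := fun k => (hI k).choose with hz0def
      set a : ∀ k, I k := Function.update z₀ i x with hadef
      set b : ∀ k, I k := Function.update z₀ i y with hbdef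
      refine ⟨U ∪ {(a, f a), (b, f b)}, Set.subset_union_left, ?_, ?_, Or.inr ?_⟩
      · intro p hp
        rcases hp with hp | hp
        · exact hUg hp
        · rcases hp with hp | hp <;> (subst hp; rfl)
      · exact hUfin.union ((Set.finite_singleton _).insert _)
      · intro B hVB hBg hphi
        have haB : (a, f a) ∈ B := hVB (Or.inr (Or.inl rfl))
        have hbB : (b, f b) ∈ B := hVB (Or.inr (Or.inr rfl))
        have hab : a i ≠ b i := by simpa [hadef, hbdef] using hxy
        obtain ⟨v, hv, v', hv', h1, h2, h3, h4⟩ := hphi i (a, f a) haB (b, f b) hbB hab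
        have h1' : v.1 i = x := by simpa [hadef] using h1
        have h2' : v'.1 i = y := by simpa [hbdef] using h2
        have hveq : v'.1 = Function.update v.1 i y := by
          funext k
          by_cases hk : k = i
          · subst hk; simpa using h2'
          · rw [Function.update_of_ne hk]
            exact (h3 k hk).symm
        have hv1 : Function.update v.1 i x = v.1 := by
          rw [← h1']; exact Function.update_eq_self i v.1
        apply h4
        have e1 : v.2 = f v.1 := hBg hv
        have e2 : v'.2 = f v'.1 := hBg hv'
        rw [e1, e2, hveq, ← hz v.1, hv1]
    case inr =>
      haveI := hfin
      have hgfin : (graphOf f).Finite := by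
        apply (Set.finite_range (fun x : ∀ k, I k => (x, f x))).subset
        rintro ⟨p1, p2⟩ hp
        exact ⟨p1, by simp [graphOf] at hp; simp [hp]⟩
      refine ⟨graphOf f, hUg, le_refl _, hgfin, ?_⟩
      by_cases h : PhiDM (graphOf f)
      · left
        intro B h1 h2
        rwa [subset_antisymm h2 h1]
      · right
        intro B h1 h2
        rwa [subset_antisymm h2 h1]
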